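/- Let g be a finite-dimensional simple Lie algebra over ℂ, (x, 𝔥, y) a principal sl₂-triple, P the canonical splitting of ad y, and κ the Killing form. For h ∈ z(x), define Γ_h : z(y) → g by Γ_h(v) = Σ_{k=0}^{n} (-1)^k (P ∘ ad h)^k (v), where n = dim_ℂ g. Then the trivialization Γ preserves the canonical symplectic pairing: for every h ∈ z(x), all ξ', η' ∈ z(x) and all ξ'', η'' ∈ z(y), κ(ξ', Γ_h(η'')) − κ(Γ_h(ξ''), η') = κ(ξ', η'') − κ(ξ'', η'). -/

import Mathlib

/-- Let `g` be a finite-dimensional simple Lie algebra over `ℂ`,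
`(x, H, y)` a principal `sl₂`-triple, `P` the canonical splitting of `ad y`, and `κ`
the Killing form. For `h ∈ z(x)` define `Γ_h(v) = ∑_{k=0}^{n} (-1)^k (P ∘ ad h)^k v`,
`n = dim_ℂ g`. Then the trivialization `Γ` preserves the canonical symplectic pairing:
for every `h ∈ z(x)`, all `ξ', η' ∈ z(x)` and all `ξ'', η'' ∈ z(y)`,
`κ(ξ', Γ_h(η'')) − κ(Γ_h(ξ''), η') = κ(ξ', η'') − κ(ξ'', η')`. -/
theorem gamma_preserves_canonical_symplectic_form
    {g : Type*} [LieRing g] [LieAlgebra ℂ g] [FiniteDimensional ℂ g]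
    [LieAlgebra.IsSimple ℂ g]
    (x H y : g)
    (hHx : ⁅H, x⁆ = (2 : ℂ) • x) (hHy : ⁅H, y⁆ = (-2 : ℂ) • y) (hxy : ⁅x, y⁆ = H)
    (hregx : Module.finrank ℂ (LinearMap.ker (LieAlgebra.ad ℂ g x)) = LieAlgebra.rank ℂ g)
    (hregy : Module.finrank ℂ (LinearMap.ker (LieAlgebra.ad ℂ g y)) = LieAlgebra.rank ℂ g)
    (P : g →ₗ[ℂ] g)
    (hP0 : ∀ u : g, ⁅x, u⁆ = 0 → P u = 0)
    (hP1 : LinearMap.range P ≤ LinearMap.range (LieAlgebra.ad ℂ g x))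
    (hP2 : ∀ u : g, ⁅x, u - ⁅y, P u⁆⁆ = 0)
    (Γ : g → g → g)
    (hΓ : ∀ h v : g, Γ h v = ∑ k ∈ Finset.range (Module.finrank ℂ g + 1),
      ((-1 : ℂ) ^ k) • (((P ∘ₗ LieAlgebra.ad ℂ g h : Module.End ℂ g) ^ k) v))
    (h : g) (hh : ⁅x, h⁆ = 0)
    (ξ' η' : g) (hξ' : ⁅x, ξ'⁆ = 0) (hη' : ⁅x, η'⁆ = 0)
    (ξ'' η'' : g) (hξ'' : ⁅y, ξ''⁆ = 0) (hη'' : ⁅y, η''⁆ = 0) :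
    killingForm ℂ g ξ' (Γ h η'') - killingForm ℂ g (Γ h ξ'') η' =
      killingForm ℂ g ξ' η'' - killingForm ℂ g ξ'' η' := by
  have key : ∀ ξ w : g, ⁅x, ξ⁆ = 0 → killingForm ℂ g ξ (P w) = 0 := by
    intro ξ w hξ
    obtain ⟨u, hu⟩ := hP1 ⟨w, rfl⟩
    have hu' : P w = ⁅x, u⁆ := hu.symm
    rw [hu', LieModule.traceForm_comm, LieModule.traceForm_apply_lie_apply,
      LieModule.traceForm_comm, LieModule.traceForm_apply_lie_apply]
    have hz : ⁅ξ, x⁆ = (0 : g) := by rw [← lie_skew, hξ, neg_zero]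
    rw [hz]; simp
  have key2 : ∀ ξ : g, ⁅x, ξ⁆ = 0 → ∀ v : g,
      killingForm ℂ g ξ (Γ h v) = killingForm ℂ g ξ v := by
    intro ξ hξ v
    rw [hΓ, map_sum, Finset.sum_eq_single 0]
    · simp
    · intro k hk hk0
      obtain ⟨m, rfl⟩ := Nat.exists_eq_succ_of_ne_zero hk0
      rw [pow_succ' (P ∘ₗ LieAlgebra.ad ℂ g h : Module.End ℂ g) m]
      simp only [Module.End.mul_apply, LinearMap.comp_apply, map_smul,
        smul_eq_mul]
      rw [key ξ _ hξ]
      ring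
    · intro habs
      exact absurd (Finset.mem_range.mpr (Nat.succ_pos _)) habs
  have h1 : killingForm ℂ g ξ' (Γ h η'') = killingForm ℂ g ξ' η'' := key2 ξ' hξ' η''
  have h2 : killingForm ℂ g (Γ h ξ'') η' = killingForm ℂ g ξ'' η' := by
    rw [LieModule.traceForm_comm, key2 η' hη' ξ'', LieModule.traceForm_comm]
  rw [h1, h2]
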